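/- Let A and B be mutually visible compact convex regions in a visibility representation by disjoint compact convex regions. If some other region of the representation intersects a line segment joining a point of A to a point of B, then the edge AB is contained in a triangle of the visibility graph: there is a region C adjacent to both A and B. -/

import Mathlib

open Set

/-- A sightline between the regions of `u` and `v`: a segment from a point of `F u`
to a point of `F v` meeting no other region. -/
def Sightline {V : Type*} (F : V → Set (ℝ × ℝ)) (u v : V) : Prop :=
  ∃ a ∈ F u, ∃ b ∈ F v, ∀ w, w ≠ u → w ≠ v → segment ℝ a b ∩ F w = ∅

/-- A visibility representation of a simple graph by regions in the plane. -/
structure IsVisRep {V : Type*} (G : SimpleGraph V) (F : V → Set (ℝ × ℝ)) : Prop where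
  nonempty : ∀ v, (F v).Nonempty
  disjoint : ∀ u v, u ≠ v → Disjoint (F u) (F v)
  adj_iff : ∀ u v, u ≠ v → (G.Adj u v ↔ Sightline F u v)

lemma affine_combo (x d : ℝ × ℝ) (a b c1 c2 : ℝ) (h : a + b = 1) :
    a • (x + c1 • d) + b • (x + c2 • d) = x + (a*c1 + b*c2) • d := by
  have hx : a • x + b • x = x := by rw [← add_smul, h, one_smul]
  rw [smul_add, smul_add, smul_smul, smul_smul, add_smul]
  calc a • x + (a*c1) • d + (b • x + (b*c2) • d)
      = (a • x + b • x) + ((a*c1) • d + (b*c2) • d) := by abel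
    _ = x + ((a*c1) • d + (b*c2) • d) := by rw [hx]

lemma closedHit (p q r : ℝ × ℝ) (S : Set (ℝ × ℝ)) (hS : IsClosed S) :
    IsClosed {t : ℝ | t ∈ Icc (0:ℝ) 1 ∧ (segment ℝ p (q + t • (r - q)) ∩ S).Nonempty} := by
  have hg : Continuous fun u : ℝ × ℝ => p + u.2 • ((q + u.1 • (r - q)) - p) :=
    continuous_const.add (continuous_snd.smul
      (((continuous_const.add (continuous_fst.smul continuous_const))).sub continuous_const))
  have hK : IsCompact ((Icc (0:ℝ) 1 ×ˢ Icc (0:ℝ) 1) ∩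
      (fun u : ℝ × ℝ => p + u.2 • ((q + u.1 • (r - q)) - p)) ⁻¹' S) :=
    (isCompact_Icc.prod isCompact_Icc).inter_right (hS.preimage hg)
  have himg : {t : ℝ | t ∈ Icc (0:ℝ) 1 ∧ (segment ℝ p (q + t • (r - q)) ∩ S).Nonempty}
      = Prod.fst '' ((Icc (0:ℝ) 1 ×ˢ Icc (0:ℝ) 1) ∩
      (fun u : ℝ × ℝ => p + u.2 • ((q + u.1 • (r - q)) - p)) ⁻¹' S) := by
    ext t
    constructor
    · rintro ⟨ht, z, hzseg, hzS⟩
      rw [segment_eq_image'] at hzseg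
      obtain ⟨θ, hθ, hz⟩ := hzseg
      exact ⟨(t, θ), ⟨⟨ht, hθ⟩, by simpa [hz] using hzS⟩, rfl⟩
    · rintro ⟨⟨t', θ⟩, ⟨⟨ht, hθ⟩, hmem⟩, rfl⟩
      refine ⟨ht, p + θ • ((q + t' • (r - q)) - p), ?_, hmem⟩
      rw [segment_eq_image']
      exact ⟨θ, hθ, rfl⟩
  rw [himg]
  exact (hK.image continuous_fst).isClosed

lemma combo2 (x y v : ℝ × ℝ) (lam b t1 th m0 r : ℝ) (hm : m0 = (1-lam)*b + lam)
    (hr : m0 * r = (1-lam)*b*t1 + lam*th) :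
    (x + b • ((y + t1 • v) - x)) + lam • ((y + th • v) - (x + b • ((y + t1 • v) - x)))
      = x + m0 • ((y + r • v) - x) := by
  subst hm
  match_scalars
  all_goals (try ring)
  all_goals (ring_nf at hr ⊢; linarith [hr])

set_option maxHeartbeats 2000000 in
lemma key {V : Type*} [Fintype V] (F : V → Set (ℝ × ℝ))
    (hdis : ∀ u v : V, u ≠ v → Disjoint (F u) (F v)) (hcl : ∀ v, IsClosed (F v))
    (hconv : ∀ v, Convex ℝ (F v)) (X Y : V) (hXY : X ≠ Y)
    (x₀ : ℝ × ℝ) (hx₀ : x₀ ∈ F X) (y₀ y₁ : ℝ × ℝ) (hy₀ : y₀ ∈ F Y) (hy₁ : y₁ ∈ F Y)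
    (hclear : ∀ w, w ≠ X → w ≠ Y → segment ℝ x₀ y₀ ∩ F w = ∅)
    (C : V) (hCX : C ≠ X) (hCY : C ≠ Y) (hblk : (segment ℝ x₀ y₁ ∩ F C).Nonempty) :
    ∃ D, D ≠ X ∧ D ≠ Y ∧ Sightline F X D ∧ Sightline F Y D := by
  classical
  by_cases hy01 : y₀ = y₁
  · exact absurd hblk (by rw [← hy01, hclear C hCX hCY]; exact Set.not_nonempty_empty)
  set f : ℝ → ℝ × ℝ := fun t => y₀ + t • (y₁ - y₀) with hfdef
  have hf0 : f 0 = y₀ := by simp [hfdef]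
  have hf1 : f 1 = y₁ := by simp [hfdef]
  set T : Set ℝ := {t | t ∈ Icc (0:ℝ) 1 ∧
      ∃ w, w ≠ X ∧ w ≠ Y ∧ (segment ℝ x₀ (f t) ∩ F w).Nonempty} with hTdef
  have hTne : T.Nonempty := ⟨1, ⟨by norm_num, C, hCX, hCY, by rwa [hf1]⟩⟩
  have hTbdd : BddBelow T := ⟨0, fun t ht => ht.1.1⟩
  have hTclosed : IsClosed T := by
    have hTeq : T = ⋃ w : V, {t : ℝ | t ∈ Icc (0:ℝ) 1 ∧ w ≠ X ∧ w ≠ Y ∧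
        (segment ℝ x₀ (f t) ∩ F w).Nonempty} := by
      ext t
      simp only [hTdef, mem_setOf_eq, mem_iUnion]
      tauto
    rw [hTeq]
    refine isClosed_iUnion_of_finite fun w => ?_
    by_cases hw : w ≠ X ∧ w ≠ Y
    · have he : {t : ℝ | t ∈ Icc (0:ℝ) 1 ∧ w ≠ X ∧ w ≠ Y ∧
          (segment ℝ x₀ (f t) ∩ F w).Nonempty}
          = {t : ℝ | t ∈ Icc (0:ℝ) 1 ∧ (segment ℝ x₀ (y₀ + t • (y₁ - y₀)) ∩ F w).Nonempty} := by
        ext t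
        simp only [mem_setOf_eq, hfdef]
        tauto
      rw [he]
      exact closedHit x₀ y₀ y₁ (F w) (hcl w)
    · have he : {t : ℝ | t ∈ Icc (0:ℝ) 1 ∧ w ≠ X ∧ w ≠ Y ∧
          (segment ℝ x₀ (f t) ∩ F w).Nonempty} = ∅ := by
        ext t
        simp only [mem_setOf_eq, mem_empty_iff_false, iff_false]
        rintro ⟨-, h1, h2, -⟩
        exact hw ⟨h1, h2⟩
      rw [he]
      exact isClosed_empty
  set t₁ := sInf T with ht₁def
  have ht₁T : t₁ ∈ T := hTclosed.csInf_mem hTne hTbdd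
  have hmemseg : ∀ t, t ∈ Icc (0:ℝ) 1 → f t ∈ F Y := by
    intro t ht
    refine (hconv Y).segment_subset hy₀ hy₁ ?_
    rw [segment_eq_image']
    exact ⟨t, ht, rfl⟩
  have hclear_lt : ∀ t, 0 ≤ t → t < t₁ → ∀ w, w ≠ X → w ≠ Y →
      segment ℝ x₀ (f t) ∩ F w = ∅ := by
    intro t ht0 htlt w hwX hwY
    by_contra h
    have : t ∈ T := ⟨⟨ht0, htlt.le.trans ht₁T.1.2⟩, w, hwX, hwY,
      Set.nonempty_iff_ne_empty.2 h⟩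
    exact absurd (csInf_le hTbdd this) (not_le.2 htlt)
  have ht₁0 : 0 < t₁ := by
    rcases lt_or_eq_of_le ht₁T.1.1 with h | h
    · exact h
    · exfalso
      obtain ⟨_, w, hwX, hwY, hne⟩ := ht₁T
      rw [← h, hf0] at hne
      rw [hclear w hwX hwY] at hne
      exact Set.not_nonempty_empty hne
  set ystar := f t₁ with hystardef
  have hystar : ystar ∈ F Y := hmemseg t₁ ht₁T.1
  have hxy : x₀ ≠ ystar := fun h =>
    Set.disjoint_left.1 (hdis X Y hXY) hx₀ (h ▸ hystar)
  set d := ystar - x₀ with hddef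
  have hd0 : d ≠ 0 := sub_ne_zero.2 (Ne.symm hxy)
  set Pc : ℝ → ℝ × ℝ := fun c => x₀ + c • d with hPcdef
  have hPc0 : Pc 0 = x₀ := by simp [hPcdef]
  have hPc1 : Pc 1 = ystar := by simp [hPcdef, hddef]
  have hPcinj : Function.Injective Pc := by
    intro a b hab
    simp only [hPcdef, add_right_inj] at hab
    have := sub_eq_zero.2 hab
    rw [← sub_smul] at this
    rcases smul_eq_zero.1 this with h | h
    · exact sub_eq_zero.1 h
    · exact absurd h hd0
  have hsegP : segment ℝ x₀ ystar = Pc '' Icc 0 1 := by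
    rw [segment_eq_image']
  have hseg_image : ∀ u v : ℝ, u ≤ v → segment ℝ (Pc u) (Pc v) = Pc '' Icc u v := by
    intro u v huv
    rw [← segment_eq_Icc huv]
    ext z
    constructor
    · rintro ⟨a, b, ha, hb, hab, rfl⟩
      refine ⟨a*u + b*v, ⟨a, b, ha, hb, hab, by simp [smul_eq_mul]⟩, ?_⟩
      simp only [hPcdef]
      exact (affine_combo x₀ d a b u v hab).symm
    · rintro ⟨c, ⟨a, b, ha, hb, hab, hc⟩, rfl⟩
      refine ⟨a, b, ha, hb, hab, ?_⟩
      simp only [hPcdef]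
      rw [affine_combo x₀ d a b u v hab]
      have h2 : a*u+b*v = c := by simpa using hc
      rw [h2]
  set J : V → Set ℝ := fun w => {c | c ∈ Icc (0:ℝ) 1 ∧ Pc c ∈ F w} with hJdef
  have hJcpt : ∀ w, IsCompact (J w) := by
    intro w
    exact isCompact_Icc.inter_right ((hcl w).preimage
      (continuous_const.add (continuous_id.smul continuous_const)))
  have hJconv : ∀ w, Convex ℝ (J w) := by
    intro w
    rintro c1 hc1 c2 hc2 a b ha hb hab
    refine ⟨convex_Icc 0 1 hc1.1 hc2.1 ha hb hab, ?_⟩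
    have hF := (hconv w) hc1.2 hc2.2 ha hb hab
    simp only [hPcdef] at hF ⊢
    rw [affine_combo x₀ d a b c1 c2 hab] at hF
    simpa using hF
  have hJd : ∀ w w' : V, w ≠ w' → ∀ c, c ∈ J w → c ∉ J w' := by
    intro w w' hww c hc hc'
    exact Set.disjoint_left.1 (hdis w w' hww) hc.2 hc'.2
  have hJmono : ∀ w : V, ∀ c1 ∈ J w, ∀ c2 ∈ J w, ∀ c, c1 ≤ c → c ≤ c2 → c ∈ J w := by
    intro w c1 h1 c2 h2 c hc1 hc2
    exact ((hJconv w).ordConnected).out h1 h2 ⟨hc1, hc2⟩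
  -- blockers
  have hBne : ∃ w, w ≠ X ∧ w ≠ Y ∧ (J w).Nonempty := by
    obtain ⟨_, w, hwX, hwY, z, hzseg, hzF⟩ := ht₁T
    rw [← hystardef, hsegP] at hzseg
    obtain ⟨c, hc, rfl⟩ := hzseg
    exact ⟨w, hwX, hwY, c, hc, hzF⟩
  set S : Finset V := Finset.univ.filter (fun w => w ≠ X ∧ w ≠ Y ∧ (J w).Nonempty) with hSdef
  have hSne : S.Nonempty := by
    obtain ⟨w, h1, h2, h3⟩ := hBne
    exact ⟨w, by simp [hSdef, h1, h2, h3]⟩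
  obtain ⟨D, hDS, hDmin⟩ := S.exists_min_image (fun w => sInf (J w)) hSne
  have hDX : D ≠ X := (Finset.mem_filter.1 hDS).2.1
  have hDY : D ≠ Y := (Finset.mem_filter.1 hDS).2.2.1
  have hJDne : (J D).Nonempty := (Finset.mem_filter.1 hDS).2.2.2
  set α := sInf (J D) with hαdef
  set β := sSup (J D) with hβdef
  have hα : α ∈ J D := (hJcpt D).sInf_mem hJDne
  have hβ : β ∈ J D := (hJcpt D).sSup_mem hJDne
  have hαβ : α ≤ β := csInf_le_csSup hJDne (hJcpt D).bddBelow (hJcpt D).bddAbove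
  have h0JX : (0:ℝ) ∈ J X := ⟨by norm_num, by rw [hPc0]; exact hx₀⟩
  have h1JY : (1:ℝ) ∈ J Y := ⟨by norm_num, by rw [hPc1]; exact hystar⟩
  set uX := sSup (J X) with huXdef
  set uY := sInf (J Y) with huYdef
  have huX : uX ∈ J X := (hJcpt X).sSup_mem ⟨0, h0JX⟩
  have huY : uY ∈ J Y := (hJcpt Y).sInf_mem ⟨1, h1JY⟩
  -- K2 : blocker params strictly between uX and uY
  have hK2 : ∀ w : V, w ≠ X → w ≠ Y → ∀ c ∈ J w, uX < c ∧ c < uY := by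
    intro w hwX hwY c hc
    constructor
    · by_contra h
      push_neg at h
      exact hJd w X hwX c hc (hJmono X 0 h0JX uX huX c hc.1.1 h)
    · by_contra h
      push_neg at h
      exact hJd w Y hwY c hc (hJmono Y uY huY 1 h1JY c h hc.1.2)
  -- K3 : other blockers live strictly above β
  have hK3 : ∀ w : V, w ≠ X → w ≠ Y → w ≠ D → ∀ c ∈ J w, β < c := by
    intro w hwX hwY hwD c hc
    have hwS : w ∈ S := by
      simp only [hSdef, Finset.mem_filter, Finset.mem_univ, true_and]
      exact ⟨hwX, hwY, ⟨c, hc⟩⟩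
    have hmin : α ≤ sInf (J w) := hDmin w hwS
    have hw_inf : sInf (J w) ∈ J w := (hJcpt w).sInf_mem ⟨c, hc⟩
    have hinfc : sInf (J w) ≤ c := csInf_le (hJcpt w).bddBelow hc
    by_contra h
    push_neg at h
    exact hJd w D hwD _ hw_inf (hJmono D α hα β hβ _ hmin (le_trans hinfc h))
  have huXα : uX < α := (hK2 D hDX hDY α hα).1
  have hαuY : α < uY := (hK2 D hDX hDY α hα).2
  -- Sightline X D
  have hSLX : Sightline F X D := by
    refine ⟨Pc uX, huX.2, Pc α, hα.2, ?_⟩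
    intro w hwX hwD
    rw [hseg_image uX α (le_of_lt huXα)]
    by_contra h
    obtain ⟨z, hz1, hzF⟩ := Set.nonempty_iff_ne_empty.2 h
    obtain ⟨c, hcmem, rfl⟩ := hz1
    have hcJ : c ∈ J w := ⟨⟨le_trans huX.1.1 hcmem.1, le_trans hcmem.2 hα.1.2⟩, hzF⟩
    by_cases hwY : w = Y
    · subst hwY
      have h1 : uY ≤ c := csInf_le (hJcpt w).bddBelow hcJ
      linarith [hcmem.2, hαuY]
    · have := hK3 w hwX hwY hwD c hcJ
      linarith [hcmem.2, hαβ]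
  -- Sightline Y D
  have ht₁Icc : t₁ ∈ Icc (0:ℝ) 1 := ht₁T.1
  clear_value f T t₁ ystar d Pc α β uX uY
  have hSLY : Sightline F Y D := by
    set p1 := Pc β with hp1def
    clear_value p1
    have hp1 : p1 ∈ F D := by rw [hp1def]; exact hβ.2
    have h0β : 0 ≤ β := hβ.1.1
    have hβ1 : β ≤ 1 := hβ.1.2
    have huX0 : 0 ≤ uX := huX.1.1
    have hβpos : 0 < β := lt_of_le_of_lt huX0 (lt_of_lt_of_le huXα hαβ)
    have ht₁le1 : t₁ ≤ 1 := ht₁Icc.2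
    set TX : Set ℝ := {t : ℝ | t ∈ Icc 0 1 ∧
        (segment ℝ p1 (y₀ + t • (y₁ - y₀)) ∩ F X).Nonempty} with hTXdef
    have hTXclosed : IsClosed TX := by
      rw [hTXdef]
      exact closedHit p1 y₀ y₁ (F X) (hcl X)
    have he1 : (y₀ + t₁ • (y₁ - y₀) : ℝ × ℝ) = Pc 1 := by
      rw [hPc1, hystardef, hfdef]
    have ht₁TX : t₁ ∉ TX := by
      rintro ⟨-, z, hzseg, hzF⟩
      rw [he1, hp1def, hseg_image β 1 hβ1] at hzseg
      obtain ⟨c, hcmem, rfl⟩ := hzseg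
      have hcJX : c ∈ J X := ⟨⟨le_trans h0β hcmem.1, hcmem.2⟩, hzF⟩
      have hcle : c ≤ uX := by rw [huXdef]; exact le_csSup (hJcpt X).bddAbove hcJX
      linarith [hcmem.1, huXα, hαβ]
    obtain ⟨ε, hε0, hball⟩ := Metric.isOpen_iff.1 hTXclosed.isOpen_compl t₁ ht₁TX
    have hgood : ∀ t, 0 ≤ t → t < t₁ → dist t t₁ < ε →
        segment ℝ p1 (f t) ∩ F X = ∅ := by
      intro t h0 hlt hd
      have hmem := hball (Metric.mem_ball.2 hd)
      by_contra h
      simp only [hfdef] at h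
      exact hmem (by rw [hTXdef]; exact ⟨⟨h0, hlt.le.trans ht₁le1⟩,
        Set.nonempty_iff_ne_empty.2 h⟩)
    have hmain : ∀ th, 0 ≤ th → th < t₁ → segment ℝ p1 (f th) ∩ F X = ∅ →
        (¬ ∃ c, f th = Pc c) → Sightline F Y D := by
      intro th h0 hlt hXempty hnot
      refine ⟨f th, hmemseg th ⟨h0, hlt.le.trans ht₁le1⟩, p1, hp1, ?_⟩
      intro w hwY hwD
      rw [segment_symm]
      by_cases hwX : w = X
      · subst hwX; exact hXempty
      by_contra h
      obtain ⟨z, hzseg, hzF⟩ := Set.nonempty_iff_ne_empty.2 h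
      rw [segment_eq_image'] at hzseg
      obtain ⟨lam, hlam, rfl⟩ := hzseg
      obtain ⟨m0, hm0def⟩ : ∃ m, m = (1-lam)*β + lam := ⟨_, rfl⟩
      have hm0pos : 0 < m0 := by
        rw [hm0def]
        nlinarith [mul_nonneg hlam.1 (sub_nonneg.2 hβ1), hβpos]
      have hm0le1 : m0 ≤ 1 := by
        rw [hm0def]
        nlinarith [mul_nonneg (sub_nonneg.2 hlam.2) (sub_nonneg.2 hβ1)]
      obtain ⟨r, hrdef⟩ : ∃ rr, rr = ((1-lam)*β*t₁ + lam*th)/m0 := ⟨_, rfl⟩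
      have hrth : th ≤ r := by
        rw [hrdef, le_div_iff₀ hm0pos, hm0def]
        nlinarith [mul_nonneg (mul_nonneg (sub_nonneg.2 hlam.2) h0β) (sub_nonneg.2 hlt.le)]
      have hrt₁ : r ≤ t₁ := by
        rw [hrdef, div_le_iff₀ hm0pos, hm0def]
        nlinarith [mul_nonneg hlam.1 (sub_nonneg.2 hlt.le)]
      have hzcombo : p1 + lam • (f th - p1) = x₀ + m0 • (f r - x₀) := by
        simp only [hp1def, hPcdef, hddef, hystardef, hfdef]
        exact combo2 x₀ y₀ (y₁ - y₀) lam β t₁ th m0 r hm0def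
          (by rw [hrdef]; field_simp)
      have hzseg' : p1 + lam • (f th - p1) ∈ segment ℝ x₀ (f r) := by
        rw [segment_eq_image']
        exact ⟨m0, ⟨hm0pos.le, hm0le1⟩, hzcombo.symm⟩
      rcases lt_or_eq_of_le hrt₁ with hr_lt | hr_eq
      · have h0r : 0 ≤ r := le_trans h0 hrth
        have hemp := hclear_lt r h0r hr_lt w hwX hwY
        have hmem : p1 + lam • (f th - p1) ∈ segment ℝ x₀ (f r) ∩ F w := ⟨hzseg', hzF⟩
        rw [hemp] at hmem
        exact Set.notMem_empty _ hmem
      · rw [hr_eq, ← hystardef, hsegP] at hzseg'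
        obtain ⟨c, hcI, hcz⟩ := hzseg'
        have hcJ : c ∈ J w := ⟨hcI, hcz ▸ hzF⟩
        have hβc : β < c := hK3 w hwX hwY hwD c hcJ
        have hlam0 : lam ≠ 0 := by
          rintro rfl
          simp only [zero_smul, add_zero] at hcz
          rw [hp1def] at hcz
          have := hPcinj hcz
          linarith
        apply hnot
        refine ⟨(c - (1-lam)*β)/lam, ?_⟩
        have h1 : lam • (f th) = Pc c - (1-lam) • p1 := by
          rw [hcz, smul_sub, sub_smul, one_smul]
          abel
        have h2 : Pc c - (1-lam) • p1 = lam • Pc ((c - (1-lam)*β)/lam) := by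
          simp only [hp1def, hPcdef]
          match_scalars
          · ring
          · field_simp
        exact smul_right_injective (ℝ × ℝ) hlam0 (h1.trans h2)
    -- choose times
    obtain ⟨δ, hδdef⟩ : ∃ dd : ℝ, dd = min ε t₁ := ⟨_, rfl⟩
    have hδ0 : 0 < δ := by rw [hδdef]; exact lt_min hε0 ht₁0
    have hδε : δ ≤ ε := by rw [hδdef]; exact min_le_left _ _
    have hδt₁ : δ ≤ t₁ := by rw [hδdef]; exact min_le_right _ _
    have hmk : ∀ k : ℝ, 0 < k → k < 1 →
        ∃ t', t' = t₁ - δ*k ∧ 0 ≤ t' ∧ t' < t₁ ∧ dist t' t₁ < ε := by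
      intro k hk0 hk1
      have h1 : 0 < δ*k := mul_pos hδ0 hk0
      have h2 : δ*k < δ := by nlinarith
      refine ⟨t₁ - δ*k, rfl, by linarith, by linarith, ?_⟩
      rw [Real.dist_eq, show t₁ - δ*k - t₁ = -(δ*k) by ring, abs_neg, abs_of_pos h1]
      linarith
    obtain ⟨t2, ht2def, h2a, h2b, h2c⟩ := hmk (1/2) (by norm_num) (by norm_num)
    obtain ⟨t3, ht3def, h3a, h3b, h3c⟩ := hmk (1/3) (by norm_num) (by norm_num)
    by_cases hL2 : ∃ c, f t2 = Pc c
    · by_cases hL3 : ∃ c, f t3 = Pc c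
      · exfalso
        obtain ⟨c2, hc2⟩ := hL2
        obtain ⟨c3, hc3⟩ := hL3
        have htt : t3 - t2 ≠ 0 := by
          rw [ht2def, ht3def]
          intro hh
          nlinarith [hδ0]
        have hv : (t3 - t2) • (y₁ - y₀) = (c3 - c2) • d := by
          have e1 : f t3 - f t2 = (t3 - t2) • (y₁ - y₀) := by
            simp only [hfdef]
            rw [sub_smul]
            abel
          have e2 : Pc c3 - Pc c2 = (c3 - c2) • d := by
            simp only [hPcdef]
            rw [sub_smul]
            abel
          rw [← e1, hc2, hc3, e2]
        have hft : ∀ t : ℝ, f t = Pc (c2 + (t - t2)/(t3-t2)*(c3-c2)) := by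
          intro t
          have e1 : f t = f t2 + (t - t2) • (y₁ - y₀) := by
            simp only [hfdef]
            rw [sub_smul]
            abel
          rw [e1, hc2]
          have e2 : (t - t2) • (y₁ - y₀) = ((t - t2)/(t3-t2)) • ((t3 - t2) • (y₁ - y₀)) := by
            rw [smul_smul]
            congr 1
            field_simp
          rw [e2, hv, smul_smul]
          simp only [hPcdef]
          rw [add_assoc, ← add_smul]
        have hct₁ : c2 + (t₁ - t2)/(t3-t2)*(c3-c2) = 1 := by
          apply hPcinj
          rw [← hft t₁, hPc1, hystardef]
        obtain ⟨mm, hmmdef⟩ : ∃ m, m = (c3-c2)/(t3-t2) := ⟨_, rfl⟩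
        have hg : ∀ t : ℝ, c2 + (t - t2)/(t3-t2)*(c3-c2) = 1 + (t - t₁)*mm := by
          intro t
          rw [hmmdef, ← hct₁]
          field_simp
          ring
        have hca : ∀ t, f t = Pc (1 + (t - t₁)*mm) := fun t => by rw [hft t, hg t]
        have hα1 : α < 1 := lt_of_lt_of_le hαuY huY.1.2
        have hα0 : 0 ≤ α := hα.1.1
        obtain ⟨tt, htt0, httlt, httα⟩ : ∃ tt, 0 ≤ tt ∧ tt < t₁ ∧ α ≤ 1 + (tt - t₁)*mm := by
          rcases le_or_gt mm 0 with hm | hm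
          · refine ⟨t2, h2a, h2b, ?_⟩
            nlinarith [mul_nonneg (by linarith [h2b] : (0:ℝ) ≤ t₁ - t2) (neg_nonneg.2 hm)]
          · refine ⟨max t2 (t₁ - (1-α)/mm), le_trans h2a (le_max_left _ _), ?_, ?_⟩
            · apply max_lt h2b
              have : 0 < (1-α)/mm := div_pos (by linarith) hm
              linarith
            · have h1 : t₁ - max t2 (t₁ - (1-α)/mm) ≤ (1-α)/mm := by
                have := le_max_right t2 (t₁ - (1-α)/mm)
                linarith
              have h2 : (t₁ - max t2 (t₁ - (1-α)/mm))*mm ≤ 1-α := (le_div_iff₀ hm).1 h1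
              nlinarith [h2]
        have hmem2 : Pc α ∈ segment ℝ x₀ (f tt) ∩ F D := by
          refine ⟨?_, hα.2⟩
          rw [hca tt, ← hPc0, hseg_image 0 (1 + (tt - t₁)*mm) (le_trans hα0 httα)]
          exact ⟨α, ⟨hα0, httα⟩, rfl⟩
        rw [hclear_lt tt htt0 httlt D hDX hDY] at hmem2
        exact Set.notMem_empty _ hmem2
      · exact hmain t3 h3a h3b (hgood t3 h3a h3b h3c) hL3
    · exact hmain t2 h2a h2b (hgood t2 h2a h2b h2c) hL2
  exact ⟨D, hDX, hDY, hSLX, hSLY⟩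

theorem stmt1 {V : Type*} [Fintype V] (G : SimpleGraph V) (F : V → Set (ℝ × ℝ))
    (hrep : IsVisRep G F) (hcpt : ∀ v, IsCompact (F v)) (hconv : ∀ v, Convex ℝ (F v))
    (A B : V) (hAB : G.Adj A B)
    (a : ℝ × ℝ) (ha : a ∈ F A) (b : ℝ × ℝ) (hb : b ∈ F B)
    (C : V) (hCA : C ≠ A) (hCB : C ≠ B) (hblock : (segment ℝ a b ∩ F C).Nonempty) :
    ∃ D : V, G.Adj A D ∧ G.Adj B D := by
  obtain ⟨a₀, ha₀, b₀, hb₀, hs⟩ := (hrep.adj_iff A B hAB.ne).1 hAB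
  have hcl : ∀ v, IsClosed (F v) := fun v => (hcpt v).isClosed
  by_cases hblk : ∃ w, w ≠ A ∧ w ≠ B ∧ (segment ℝ a₀ b ∩ F w).Nonempty
  · obtain ⟨C', h1, h2, h3⟩ := hblk
    obtain ⟨D, hDX, hDY, hSX, hSY⟩ := key F hrep.disjoint hcl hconv A B hAB.ne
      a₀ ha₀ b₀ b hb₀ hb hs C' h1 h2 h3
    exact ⟨D, (hrep.adj_iff A D (Ne.symm hDX)).2 hSX,
      (hrep.adj_iff B D (Ne.symm hDY)).2 hSY⟩
  · push_neg at hblk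
    have hclear' : ∀ w, w ≠ B → w ≠ A → segment ℝ b a₀ ∩ F w = ∅ := by
      intro w h1 h2
      rw [segment_symm]
      exact hblk w h2 h1
    obtain ⟨D, hDX, hDY, hSX, hSY⟩ := key F hrep.disjoint hcl hconv B A (Ne.symm hAB.ne)
      b hb a₀ a ha₀ ha hclear' C hCB hCA (by rw [segment_symm]; exact hblock)
    exact ⟨D, (hrep.adj_iff A D (Ne.symm hDY)).2 hSY,
      (hrep.adj_iff B D (Ne.symm hDX)).2 hSX⟩
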